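/- Let μ be an atomless Borel probability measure on ℝ and μ^5 the product measure on (Fin 5 → ℝ), modeling five i.i.d. random numbers. Then the probability of the up-down-up-down pattern, μ^5 { x | x 0 < x 1 ∧ x 2 < x 1 ∧ x 2 < x 3 ∧ x 4 < x 3 }, equals 2/15. -/

import Mathlib

open MeasureTheory Set
open scoped ENNReal

set_option maxRecDepth 20000

namespace UDUDAux

/-- The set of tuples that are strictly increasing along the permutation `σ`. -/
def A (σ : Equiv.Perm (Fin 5)) : Set (Fin 5 → ℝ) := {x | StrictMono (x ∘ σ)}

/-- The pattern condition on the ranks. -/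
def P (σ : Equiv.Perm (Fin 5)) : Prop :=
  σ.symm 0 < σ.symm 1 ∧ σ.symm 2 < σ.symm 1 ∧ σ.symm 2 < σ.symm 3 ∧ σ.symm 4 < σ.symm 3

instance : DecidablePred P := fun σ => by unfold P; infer_instance

theorem card_P : (Finset.univ.filter P).card = 16 := by decide

theorem inv_exists : ∀ e : Equiv.Perm (Fin 5), e ≠ 1 → ∃ i j : Fin 5, i < j ∧ e j < e i := by
  decide

theorem measurableSet_A (σ : Equiv.Perm (Fin 5)) : MeasurableSet (A σ) := by
  have h : A σ = ⋂ (i : Fin 5) (j : Fin 5) (_ : i < j), {x : Fin 5 → ℝ | x (σ i) < x (σ j)} := by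
    ext x
    simp only [A, StrictMono, mem_setOf_eq, mem_iInter, Function.comp_apply]
  rw [h]
  exact MeasurableSet.iInter fun i => MeasurableSet.iInter fun j => MeasurableSet.iInter fun _ =>
    measurableSet_lt (measurable_pi_apply _) (measurable_pi_apply _)

theorem A_disjoint : ∀ σ τ : Equiv.Perm (Fin 5), σ ≠ τ → Disjoint (A σ) (A τ) := by
  intro σ τ hστ
  rw [Set.disjoint_left]
  intro x hxσ hxτ
  have he : σ⁻¹ * τ ≠ 1 := fun h => hστ (inv_mul_eq_one.mp h)
  obtain ⟨i, j, hij, hej⟩ := inv_exists (σ⁻¹ * τ) he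
  have h1 : x (τ i) < x (τ j) := hxτ hij
  have hτσ : ∀ k, σ ((σ⁻¹ * τ) k) = τ k := fun k => by
    simp [Equiv.Perm.mul_apply]
  have h2 : x (τ j) < x (τ i) := by
    have := hxσ hej
    simpa [Function.comp_apply, hτσ] using this
  exact absurd h1 (not_lt.2 h2.le)

theorem exists_mem_A (x : Fin 5 → ℝ) (hx : Function.Injective x) : ∃ σ, x ∈ A σ :=
  ⟨Tuple.sort x, (Tuple.monotone_sort x).strictMono_of_injective
    (hx.comp (Equiv.injective _))⟩

theorem key_lt (σ : Equiv.Perm (Fin 5)) (x : Fin 5 → ℝ) (hx : x ∈ A σ) (a b : Fin 5) :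
    x a < x b ↔ σ.symm a < σ.symm b := by
  have h1 : (x ∘ σ) (σ.symm a) = x a := by simp
  have h2 : (x ∘ σ) (σ.symm b) = x b := by simp
  rw [← h1, ← h2]
  exact hx.lt_iff_lt

variable (μ : Measure ℝ) [IsProbabilityMeasure μ] [NullSingletonClass μ]

theorem measure_A_eq (σ : Equiv.Perm (Fin 5)) :
    (Measure.pi fun _ : Fin 5 => μ) (A σ) = (Measure.pi fun _ : Fin 5 => μ) (A 1) := by
  have hmp := measurePreserving_piCongrLeft (fun _ : Fin 5 => μ) (σ.symm : Fin 5 ≃ Fin 5)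
  have hcoe : ⇑(MeasurableEquiv.piCongrLeft (fun _ : Fin 5 => ℝ) (σ.symm : Fin 5 ≃ Fin 5))
      = fun x : Fin 5 → ℝ => x ∘ σ := by
    funext x
    funext b
    simp [MeasurableEquiv.piCongrLeft, Equiv.piCongrLeft]
  have hpre : A σ = (fun x : Fin 5 → ℝ => x ∘ σ) ⁻¹' A 1 := by
    ext x
    simp [A, Function.comp]
  rw [hpre, ← hcoe]
  exact hmp.measure_preimage (measurableSet_A 1).nullMeasurableSet

theorem diag_null (i j : Fin 5) (hij : i ≠ j) :
    (Measure.pi fun _ : Fin 5 => μ) {x | x i = x j} = 0 := by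
  obtain ⟨k, hk⟩ := Fin.exists_succAbove_eq hij.symm
  have hmp := measurePreserving_piFinSuccAbove (fun _ : Fin 5 => μ) i
  set e := MeasurableEquiv.piFinSuccAbove (fun _ : Fin 5 => ℝ) i with he
  have hS : MeasurableSet {p : ℝ × (Fin 4 → ℝ) | p.1 = p.2 k} :=
    measurableSet_eq_fun measurable_fst ((measurable_pi_apply k).comp measurable_snd)
  have hset : {x : Fin 5 → ℝ | x i = x j} = e ⁻¹' {p : ℝ × (Fin 4 → ℝ) | p.1 = p.2 k} := by
    ext x
    simp [he, MeasurableEquiv.piFinSuccAbove, MeasurableEquiv.coe_mk, Fin.insertNthEquiv, Fin.removeNth, hk]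
  rw [hset, hmp.measure_preimage hS.nullMeasurableSet]
  rw [Measure.prod_apply hS]
  have h0 : ∀ a : ℝ,
      (Measure.pi fun _ : Fin 4 => μ) (Prod.mk a ⁻¹' {p : ℝ × (Fin 4 → ℝ) | p.1 = p.2 k}) = 0 := by
    intro a
    have heq : (Prod.mk a ⁻¹' {p : ℝ × (Fin 4 → ℝ) | p.1 = p.2 k})
        = Function.eval k ⁻¹' ({a} : Set ℝ) := by
      ext y; simp [eq_comm, Function.eval]
    rw [heq]
    exact Measure.pi_eval_preimage_null (fun _ : Fin 4 => μ) (measure_singleton a)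
  simp only [h0, lintegral_zero]

end UDUDAux

open UDUDAux

theorem udud_pattern_prob
    (μ : Measure ℝ) [IsProbabilityMeasure μ] [NullSingletonClass μ] :
    (Measure.pi fun _ : Fin 5 => μ)
      {x | x 0 < x 1 ∧ x 2 < x 1 ∧ x 2 < x 3 ∧ x 4 < x 3} = 2 / 15 := by
  set π := Measure.pi fun _ : Fin 5 => μ with hπ
  set T : Set (Fin 5 → ℝ) := {x | x 0 < x 1 ∧ x 2 < x 1 ∧ x 2 < x 3 ∧ x 4 < x 3} with hT
  set N : Set (Fin 5 → ℝ) := ⋃ (i : Fin 5) (j : Fin 5) (_ : i ≠ j), {x | x i = x j} with hN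
  have hNnull : π N = 0 := by
    refine measure_iUnion_null fun i => measure_iUnion_null fun j => measure_iUnion_null fun h => ?_
    exact diag_null μ i j h
  have hinj : ∀ x : Fin 5 → ℝ, x ∉ N → Function.Injective x := by
    intro x hx a b hab
    by_contra hne
    exact hx (mem_iUnion.2 ⟨a, mem_iUnion.2 ⟨b, mem_iUnion.2 ⟨hne, hab⟩⟩⟩)
  set S : Finset (Equiv.Perm (Fin 5)) := Finset.univ.filter P with hS
  -- step 1 : T and the union over S agree off N
  have hTdiff : T \ N = (⋃ σ ∈ S, A σ) \ N := by
    ext x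
    constructor
    · rintro ⟨hxT, hxN⟩
      obtain ⟨σ, hσ⟩ := exists_mem_A x (hinj x hxN)
      have hPσ : σ ∈ S := by
        rw [hS, Finset.mem_filter]
        refine ⟨Finset.mem_univ _, ?_⟩
        unfold P
        exact ⟨(key_lt σ x hσ 0 1).1 hxT.1, (key_lt σ x hσ 2 1).1 hxT.2.1,
          (key_lt σ x hσ 2 3).1 hxT.2.2.1, (key_lt σ x hσ 4 3).1 hxT.2.2.2⟩
      exact ⟨Set.mem_iUnion₂.2 ⟨σ, hPσ, hσ⟩, hxN⟩
    · rintro ⟨hxU, hxN⟩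
      obtain ⟨σ, hσS, hσ⟩ := mem_iUnion₂.1 hxU
      rw [hS, Finset.mem_filter] at hσS
      obtain ⟨-, hP⟩ := hσS
      unfold P at hP
      obtain ⟨h1, h2, h3, h4⟩ := hP
      exact ⟨⟨(key_lt σ x hσ 0 1).2 h1, (key_lt σ x hσ 2 1).2 h2,
        (key_lt σ x hσ 2 3).2 h3, (key_lt σ x hσ 4 3).2 h4⟩, hxN⟩
  have hTmeas : π T = π (⋃ σ ∈ S, A σ) := by
    rw [← measure_diff_null hNnull, hTdiff, measure_diff_null hNnull]
  -- step 2 : measure of the union over S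
  set c : ℝ≥0∞ := π (A 1) with hc
  have hsum : ∀ t : Finset (Equiv.Perm (Fin 5)), π (⋃ σ ∈ t, A σ) = t.card * c := by
    intro t
    rw [measure_biUnion_finset ?_ (fun σ _ => measurableSet_A σ)]
    · rw [Finset.sum_congr rfl (fun σ _ => measure_A_eq μ σ), Finset.sum_const, nsmul_eq_mul]
    · intro σ _ τ _ hστ
      exact A_disjoint σ τ hστ
  -- step 3 : full union has measure 1, so c = 1/120
  have hfull : π (⋃ σ ∈ (Finset.univ : Finset (Equiv.Perm (Fin 5))), A σ) = 1 := by
    refine le_antisymm (le_trans (measure_mono (subset_univ _)) (by simp [hπ])) ?_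
    have hsub : univ \ N ⊆ ⋃ σ ∈ (Finset.univ : Finset (Equiv.Perm (Fin 5))), A σ := by
      rintro x ⟨-, hxN⟩
      obtain ⟨σ, hσ⟩ := exists_mem_A x (hinj x hxN)
      exact Set.mem_iUnion₂.2 ⟨σ, Finset.mem_univ σ, hσ⟩
    calc (1 : ℝ≥0∞) = π univ := by simp [hπ]
      _ = π (univ \ N) := (measure_diff_null hNnull).symm
      _ ≤ _ := measure_mono hsub
  have hcard120 : (Finset.univ : Finset (Equiv.Perm (Fin 5))).card = 120 := by
    simp [Finset.card_univ, Fintype.card_perm]; rfl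
  have h120 : (120 : ℝ≥0∞) * c = 1 := by
    have := hsum Finset.univ
    rw [hfull, hcard120] at this
    exact_mod_cast this.symm
  have hc120 : c = 120⁻¹ := by
    have h1 : (120 : ℝ≥0∞) ≠ 0 := by norm_num
    have h2 : (120 : ℝ≥0∞) ≠ ⊤ := by norm_num
    calc c = 120⁻¹ * (120 * c) := by rw [← mul_assoc, ENNReal.inv_mul_cancel h1 h2, one_mul]
      _ = 120⁻¹ := by rw [h120, mul_one]
  have hcardS : S.card = 16 := card_P
  rw [hTmeas, hsum S, hcardS, hc120]
  calc ((S.card : ℕ) : ℝ≥0∞) * 120⁻¹ = (16 : ℝ≥0∞) * 120⁻¹ := by rw [hcardS]; norm_num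
    _ = 16 / 120 := (div_eq_mul_inv _ _).symm
    _ = 2 * 8 / (15 * 8) := by norm_num
    _ = 2 / 15 := ENNReal.mul_div_mul_right _ _ (by norm_num) (by norm_num)
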